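/- Let n ≥ 2 be an integer, ε ∈ (0,1), and let r ∈ C²([0,∞)) satisfy the regularized equation r''(t)/(1 − r'(t)²) + ((n−1)/(t+ε))·r'(t) = 1 for all t ∈ [0,∞), with |r'(t)| < 1 for all t, r(0) = 0, and r'(0) = ε/n. Then for all t ∈ [0,∞): r''(t) > 0, ε/n ≤ r'(t) < 1, (ε/n)·t ≤ r(t) ≤ t, and r''(t) ≤ 1 − (n−1)ε/(n(t+ε)). -/

import Mathlib

open Set Filter Topology

theorem stmt_5 (n : ℕ) (hn : 2 ≤ n) (ε : ℝ) (hε : ε ∈ Set.Ioo (0:ℝ) 1)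
    (r r' r'' : ℝ → ℝ)
    (hr' : ∀ t ∈ Set.Ici (0:ℝ), HasDerivWithinAt r (r' t) (Set.Ici 0) t)
    (hr'' : ∀ t ∈ Set.Ici (0:ℝ), HasDerivWithinAt r' (r'' t) (Set.Ici 0) t)
    (hcont : ContinuousOn r'' (Set.Ici 0))
    (heq : ∀ t ∈ Set.Ici (0:ℝ),
      r'' t / (1 - (r' t) ^ 2) + ((n : ℝ) - 1) / (t + ε) * r' t = 1)
    (hsp : ∀ t ∈ Set.Ici (0:ℝ), |r' t| < 1)
    (h0 : r 0 = 0) (h0' : r' 0 = ε / n) :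
    ∀ t ∈ Set.Ici (0:ℝ),
      0 < r'' t ∧
      (ε / n ≤ r' t ∧ r' t < 1) ∧
      (ε / n * t ≤ r t ∧ r t ≤ t) ∧
      r'' t ≤ 1 - ((n : ℝ) - 1) * ε / (n * (t + ε)) := by
  obtain ⟨hε0, hε1⟩ := hε
  have hn2 : (2:ℝ) ≤ (n:ℝ) := by exact_mod_cast hn
  have hn1 : (0:ℝ) < (n:ℝ) - 1 := by linarith
  have hnpos : (0:ℝ) < (n:ℝ) := by linarith
  have hsq : ∀ t ∈ Set.Ici (0:ℝ), 0 < 1 - r' t ^ 2 := by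
    intro t ht
    have h := abs_lt.mp (hsp t ht)
    nlinarith [h.1, h.2]
  have htε : ∀ t ∈ Set.Ici (0:ℝ), 0 < t + ε := fun t ht => by
    have : (0:ℝ) ≤ t := ht; linarith
  -- formula for r''
  have hformula : ∀ t ∈ Set.Ici (0:ℝ),
      r'' t = (1 - r' t ^ 2) * (1 - ((n : ℝ) - 1) / (t + ε) * r' t) := by
    intro t ht
    have h1 := hsq t ht
    have h2 := heq t ht
    have h3 : r'' t / (1 - r' t ^ 2) = 1 - ((n : ℝ) - 1) / (t + ε) * r' t := by linarith
    rw [div_eq_iff h1.ne'] at h3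
    linarith [h3]
  -- r'' 0 > 0
  have h0'' : 0 < r'' 0 := by
    have h1 := hsq 0 Set.self_mem_Ici
    have h2 := hformula 0 Set.self_mem_Ici
    rw [h0'] at h1 h2
    have h3 : ((n : ℝ) - 1) / (0 + ε) * (ε / n) = ((n:ℝ)-1)/n := by
      field_simp
      ring
    rw [h3] at h2
    have h4 : 0 < 1 - ((n:ℝ)-1)/n := by
      rw [sub_pos, div_lt_one hnpos]; linarith
    rw [h2]; positivity
  -- main claim : r'' > 0 on Ici 0
  have hpos : ∀ t ∈ Set.Ici (0:ℝ), 0 < r'' t := by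
    by_contra hcon
    push_neg at hcon
    obtain ⟨t₁, ht₁, ht₁'⟩ := hcon
    set S : Set ℝ := Set.Ici 0 ∩ r'' ⁻¹' Set.Iic 0 with hS
    have hSne : S.Nonempty := ⟨t₁, ht₁, ht₁'⟩
    have hSbdd : BddBelow S := ⟨0, fun x hx => hx.1⟩
    have hSclosed : IsClosed S :=
      hcont.preimage_isClosed_of_isClosed isClosed_Ici isClosed_Iic
    set t₀ := sInf S with ht₀def
    have ht₀S : t₀ ∈ S := hSclosed.csInf_mem hSne hSbdd
    have ht₀0 : (0:ℝ) ≤ t₀ := ht₀S.1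
    have ht₀'' : r'' t₀ ≤ 0 := ht₀S.2
    have ht₀pos : 0 < t₀ := by
      rcases lt_or_eq_of_le ht₀0 with h | h
      · exact h
      · exfalso; rw [← h] at ht₀''; linarith
    have hIco : ∀ t ∈ Set.Ico (0:ℝ) t₀, 0 < r'' t := by
      intro t ⟨h1, h2⟩
      by_contra h3
      push_neg at h3
      have : t₀ ≤ t := csInf_le hSbdd ⟨h1, h3⟩
      linarith
    -- second factor nonpositive at t₀
    have hfac : 1 - ((n : ℝ) - 1) / (t₀ + ε) * r' t₀ ≤ 0 := by
      have h1 := hsq t₀ ht₀0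
      have h2 := hformula t₀ ht₀0
      nlinarith
    -- define g
    set g : ℝ → ℝ := fun t => (t + ε) / ((n : ℝ) - 1) - r' t with hg
    have hgd : ∀ t ∈ Set.Ici (0:ℝ),
        HasDerivWithinAt g (1 / ((n : ℝ) - 1) - r'' t) (Set.Ici 0) t := by
      intro t ht
      exact (((hasDerivWithinAt_id t (Set.Ici 0)).add_const ε).div_const
        ((n : ℝ) - 1)).sub (hr'' t ht)
    have hgpos : ∀ t ∈ Set.Ico (0:ℝ) t₀, 0 < g t := by
      intro t ⟨h1, h2⟩
      have h3 := hformula t h1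
      have h4 := hsq t h1
      have h5 := hIco t ⟨h1, h2⟩
      have h6 : 0 < 1 - ((n : ℝ) - 1) / (t + ε) * r' t := by nlinarith
      have h7 := htε t h1
      rw [div_mul_eq_mul_div, sub_pos, div_lt_one h7] at h6
      simp only [hg]
      rw [sub_pos, lt_div_iff₀ hn1]
      linarith
    have hgt₀ : g t₀ ≤ 0 := by
      have h7 := htε t₀ ht₀0
      rw [div_mul_eq_mul_div, sub_nonpos, le_div_iff₀ h7] at hfac
      simp only [hg]
      rw [sub_nonpos, div_le_iff₀ hn1]
      linarith
    -- slopes on Ico 0 t₀ are nonpositive, but derivative is positive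
    have hmem : t₀ ∈ closure (Set.Ico (0:ℝ) t₀) := by
      rw [closure_Ico ht₀pos.ne]
      exact ⟨ht₀0, le_refl _⟩
    have hnebot : (𝓝[Set.Ico (0:ℝ) t₀] t₀).NeBot :=
      mem_closure_iff_nhdsWithin_neBot.mp hmem
    have hgd₀ : HasDerivWithinAt g (1 / ((n : ℝ) - 1) - r'' t₀) (Set.Ico 0 t₀) t₀ :=
      (hgd t₀ ht₀0).mono Set.Ico_subset_Ici_self
    have hnot : t₀ ∉ Set.Ico (0:ℝ) t₀ := fun h => lt_irrefl _ h.2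
    rw [hasDerivWithinAt_iff_tendsto_slope' hnot] at hgd₀
    have hslope : ∀ t ∈ Set.Ico (0:ℝ) t₀, slope g t₀ t ≤ 0 := by
      intro t ht
      have h1 := hgpos t ht
      rw [slope_def_field]
      have h2 : t - t₀ < 0 := by linarith [ht.2]
      apply div_nonpos_of_nonneg_of_nonpos
      · linarith
      · linarith
    have hle : 1 / ((n : ℝ) - 1) - r'' t₀ ≤ 0 := by
      refine le_of_tendsto hgd₀ ?_
      filter_upwards [self_mem_nhdsWithin] with t ht using hslope t ht
    have : 0 < 1 / ((n : ℝ) - 1) := by positivity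
    linarith
  -- monotonicity of r'
  have hr'cont : ContinuousOn r' (Set.Ici 0) := fun t ht =>
    (hr'' t ht).continuousWithinAt
  have hderiv'' : ∀ x ∈ interior (Set.Ici (0:ℝ)), HasDerivAt r' (r'' x) x := by
    intro x hx
    rw [interior_Ici, Set.mem_Ioi] at hx
    exact (hr'' x (le_of_lt hx)).hasDerivAt (Ici_mem_nhds hx)
  have hmono : MonotoneOn r' (Set.Ici 0) := by
    apply monotoneOn_of_deriv_nonneg (convex_Ici 0) hr'cont
    · intro x hx
      exact (hderiv'' x hx).differentiableAt.differentiableWithinAt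
    · intro x hx
      rw [(hderiv'' x hx).deriv]
      have hx' : x ∈ Set.Ici (0:ℝ) := by
        rw [interior_Ici, Set.mem_Ioi] at hx; exact le_of_lt hx
      exact (hpos x hx').le
  have hlow : ∀ t ∈ Set.Ici (0:ℝ), ε / n ≤ r' t := by
    intro t ht
    rw [← h0']
    exact hmono Set.self_mem_Ici ht ht
  have hup : ∀ t ∈ Set.Ici (0:ℝ), r' t < 1 := fun t ht => (abs_lt.mp (hsp t ht)).2
  -- r bounds
  have hrcont : ContinuousOn r (Set.Ici 0) := fun t ht => (hr' t ht).continuousWithinAt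
  have hderiv' : ∀ x ∈ interior (Set.Ici (0:ℝ)), HasDerivAt r (r' x) x := by
    intro x hx
    rw [interior_Ici, Set.mem_Ioi] at hx
    exact (hr' x (le_of_lt hx)).hasDerivAt (Ici_mem_nhds hx)
  have hdiff : DifferentiableOn ℝ r (interior (Set.Ici (0:ℝ))) := fun x hx =>
    (hderiv' x hx).differentiableAt.differentiableWithinAt
  have hintmem : ∀ x ∈ interior (Set.Ici (0:ℝ)), x ∈ Set.Ici (0:ℝ) := by
    intro x hx; rw [interior_Ici, Set.mem_Ioi] at hx; exact le_of_lt hx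
  have hrlow : ∀ t ∈ Set.Ici (0:ℝ), ε / n * t ≤ r t := by
    intro t ht
    have := (convex_Ici (0:ℝ)).mul_sub_le_image_sub_of_le_deriv hrcont hdiff
      (fun x hx => by rw [(hderiv' x hx).deriv]; exact hlow x (hintmem x hx))
      0 Set.self_mem_Ici t ht ht
    rw [h0] at this
    linarith [this]
  have hrup : ∀ t ∈ Set.Ici (0:ℝ), r t ≤ t := by
    intro t ht
    have := (convex_Ici (0:ℝ)).image_sub_le_mul_sub_of_deriv_le hrcont hdiff
      (fun x hx => by rw [(hderiv' x hx).deriv]; exact (hup x (hintmem x hx)).le)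
      0 Set.self_mem_Ici t ht ht
    rw [h0] at this
    linarith [this]
  -- final bound on r''
  intro t ht
  refine ⟨hpos t ht, ⟨hlow t ht, hup t ht⟩, ⟨hrlow t ht, hrup t ht⟩, ?_⟩
  have h1 := hsq t ht
  have h2 := hformula t ht
  have h3 := hpos t ht
  have h4 := htε t ht
  have h5 := hlow t ht
  have hB : 0 < 1 - ((n : ℝ) - 1) / (t + ε) * r' t := by nlinarith
  have hc : ((n : ℝ) - 1) * ε / (n * (t + ε)) = ((n : ℝ) - 1) / (t + ε) * (ε / n) := by
    field_simp
  rw [hc]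
  have hcnn : 0 ≤ ((n : ℝ) - 1) / (t + ε) := by positivity
  have h6 : ((n : ℝ) - 1) / (t + ε) * (ε / n) ≤ ((n : ℝ) - 1) / (t + ε) * r' t :=
    mul_le_mul_of_nonneg_left h5 hcnn
  have h7 : 1 - r' t ^ 2 ≤ 1 := by nlinarith [sq_nonneg (r' t)]
  nlinarith
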